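/- arXiv:2205.11596 — 2 statements merged into one kernel-verified Lean document; each statement's English description precedes it below -/
import Mathlib

section
/- Let p ≥ 0 be an integer, let κ > 0 and n > 0 be real with n ≠ 1, and let α ∈ ℝ satisfy the transmission boundary conditions J_p(κ) = α·J_p(√n·κ) and J_p'(κ) = α·√n·J_p'(√n·κ). Then ∫₀¹ ( J_p(κ·r)² − n·α²·J_p(√n·κ·r)² )·r dr = ((1 − n)/2)·J_p(κ)². -/
open Complex Real Filter Set

/-- Bessel function of the first kind of integer order `p`. -/
noncomputable def besselJ (p : ℕ) (z : ℂ) : ℂ :=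
  ∑' m : ℕ, ((-1 : ℂ) ^ m / ((Nat.factorial m : ℂ) * (Nat.factorial (m + p) : ℂ)))
    * (z / 2) ^ (2 * m + p)

/-- Derivative of the Bessel function. -/
noncomputable def besselJ' (p : ℕ) (z : ℂ) : ℂ := deriv (besselJ p) z

/-- The ITE determinant function `F_p(κ, n)`. -/
noncomputable def Fp (p : ℕ) (κ : ℂ) (n : ℝ) : ℂ :=
  κ * (besselJ' p κ * besselJ p ((Real.sqrt n : ℂ) * κ)
    - (Real.sqrt n : ℂ) * besselJ p κ * besselJ' p ((Real.sqrt n : ℂ) * κ))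

namespace Bx

noncomputable def c (p m : ℕ) : ℂ :=
  (-1 : ℂ) ^ m / ((Nat.factorial m : ℂ) * (Nat.factorial (m + p) : ℂ))

noncomputable def f0 (p m : ℕ) (z : ℂ) : ℂ := c p m * (z / 2) ^ (2 * m + p)
noncomputable def f1 (p m : ℕ) (z : ℂ) : ℂ :=
  c p m * (((2 * m + p : ℕ) : ℂ) / 2) * (z / 2) ^ (2 * m + p - 1)
noncomputable def f2 (p m : ℕ) (z : ℂ) : ℂ :=
  c p m * (((2 * m + p : ℕ) : ℂ) * ((2 * m + p - 1 : ℕ) : ℂ) / 4) * (z / 2) ^ (2 * m + p - 2)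

noncomputable def B (p : ℕ) (R : ℝ) (m : ℕ) : ℝ := (4 * R) ^ (2 * m + p) / m.factorial

lemma norm_c_le (p m : ℕ) : ‖c p m‖ ≤ 1 / m.factorial := by
  have h1 : ‖c p m‖ = 1 / ((m.factorial : ℝ) * ((m + p).factorial : ℝ)) := by
    simp [c, norm_div, norm_mul]
  rw [h1]
  have h2 : (1 : ℝ) ≤ ((m + p).factorial : ℝ) := by
    exact_mod_cast Nat.one_le_iff_ne_zero.2 (Nat.factorial_ne_zero _)
  have h3 : (0:ℝ) < m.factorial := by exact_mod_cast m.factorial_pos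
  rw [div_le_div_iff₀ (by positivity) h3]
  nlinarith

lemma nat_le_two_pow (k : ℕ) : (k : ℝ) ≤ 2 ^ k := by
  exact_mod_cast (Nat.lt_two_pow_self (n := k)).le

lemma nat_le_four_pow (k : ℕ) : (k : ℝ) ≤ 4 ^ k := by
  refine (nat_le_two_pow k).trans (pow_le_pow_left₀ (by norm_num) (by norm_num) k)

lemma nat_sq_le_four_pow (k : ℕ) : (k : ℝ) * (k : ℝ) ≤ 4 ^ k := by
  have := nat_le_two_pow k
  have h4 : (4:ℝ) ^ k = 2 ^ k * 2 ^ k := by rw [← mul_pow]; norm_num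
  nlinarith [Nat.cast_nonneg (α := ℝ) k]

lemma summable_B (p : ℕ) (R : ℝ) : Summable (B p R) := by
  have := (Real.summable_pow_div_factorial ((4 * R) ^ 2)).mul_left ((4 * R) ^ p)
  refine this.congr fun m => ?_
  simp only [B, pow_add, pow_mul]
  ring


lemma norm_zdiv_pow_le {z : ℂ} {R : ℝ} (hR : 1 ≤ R) (hz : ‖z‖ ≤ R) (j k : ℕ) (hjk : j ≤ k) :
    ‖(z / 2) ^ j‖ ≤ R ^ k := by
  rw [norm_pow]
  have h1 : ‖z / 2‖ ≤ R := by
    rw [norm_div]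
    simp only [Complex.norm_ofNat]
    nlinarith [norm_nonneg z]
  calc ‖z / 2‖ ^ j ≤ R ^ j := pow_le_pow_left₀ (norm_nonneg _) h1 j
    _ ≤ R ^ k := pow_le_pow_right₀ (by linarith) hjk

lemma fact_pos (m : ℕ) : (0:ℝ) < m.factorial := by exact_mod_cast m.factorial_pos

lemma bound0 (p m : ℕ) {R : ℝ} (hR : 1 ≤ R) {z : ℂ} (hz : ‖z‖ ≤ R) :
    ‖f0 p m z‖ ≤ B p R m := by
  calc ‖f0 p m z‖ = ‖c p m‖ * ‖(z/2) ^ (2*m+p)‖ := by rw [f0, norm_mul]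
    _ ≤ (1 / m.factorial) * R ^ (2*m+p) := by
        gcongr
        · exact norm_c_le p m
        · exact norm_zdiv_pow_le hR hz _ _ le_rfl
    _ ≤ (1 / m.factorial) * ((4:ℝ)^(2*m+p) * R ^ (2*m+p)) := by
        refine mul_le_mul_of_nonneg_left ?_ (by positivity)
        exact le_mul_of_one_le_left (by positivity) (one_le_pow₀ (by norm_num))
    _ = B p R m := by rw [B, mul_pow]; ring

lemma bound1 (p m : ℕ) {R : ℝ} (hR : 1 ≤ R) {z : ℂ} (hz : ‖z‖ ≤ R) :
    ‖f1 p m z‖ ≤ B p R m := by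
  set k := 2 * m + p with hk
  have hcn : ‖((k : ℕ) : ℂ) / 2‖ ≤ (k : ℝ) := by
    rw [norm_div]
    simp only [Complex.norm_natCast, Complex.norm_ofNat]
    have : (0:ℝ) ≤ k := Nat.cast_nonneg k
    linarith
  calc ‖f1 p m z‖ = ‖c p m‖ * ‖((k:ℕ):ℂ)/2‖ * ‖(z/2)^(k-1)‖ := by
        rw [f1, norm_mul, norm_mul]
    _ ≤ (1 / m.factorial) * (k:ℝ) * R ^ k := by
        gcongr
        · exact norm_c_le p m
        · exact norm_zdiv_pow_le hR hz _ _ (Nat.sub_le _ _)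
    _ ≤ (1 / m.factorial) * (4:ℝ)^k * R ^ k :=
        mul_le_mul_of_nonneg_right (mul_le_mul_of_nonneg_left (nat_le_four_pow k)
          (by positivity)) (by positivity)
    _ = B p R m := by rw [B, mul_pow, ← hk]; ring

lemma bound2 (p m : ℕ) {R : ℝ} (hR : 1 ≤ R) {z : ℂ} (hz : ‖z‖ ≤ R) :
    ‖f2 p m z‖ ≤ B p R m := by
  set k := 2 * m + p with hk
  have hcn : ‖((k : ℕ) : ℂ) * ((k - 1 : ℕ) : ℂ) / 4‖ ≤ (k : ℝ) * (k : ℝ) := by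
    rw [norm_div, norm_mul]
    simp only [Complex.norm_natCast, Complex.norm_ofNat]
    have h1 : ((k-1 : ℕ) : ℝ) ≤ (k : ℝ) := by exact_mod_cast Nat.sub_le k 1
    have : (0:ℝ) ≤ k := Nat.cast_nonneg k
    have h2 : (0:ℝ) ≤ ((k-1:ℕ):ℝ) := Nat.cast_nonneg _
    nlinarith
  calc ‖f2 p m z‖ = ‖c p m‖ * ‖((k:ℕ):ℂ) * ((k-1:ℕ):ℂ)/4‖ * ‖(z/2)^(k-2)‖ := by
        rw [f2, norm_mul, norm_mul]
    _ ≤ (1 / m.factorial) * ((k:ℝ)*(k:ℝ)) * R ^ k := by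
        gcongr
        · exact norm_c_le p m
        · exact norm_zdiv_pow_le hR hz _ _ (Nat.sub_le _ _)
    _ ≤ (1 / m.factorial) * (4:ℝ)^k * R ^ k :=
        mul_le_mul_of_nonneg_right (mul_le_mul_of_nonneg_left (nat_sq_le_four_pow k)
          (by positivity)) (by positivity)
    _ = B p R m := by rw [B, mul_pow, ← hk]; ring


noncomputable def J1 (p : ℕ) (z : ℂ) : ℂ := ∑' m, f1 p m z
noncomputable def J2 (p : ℕ) (z : ℂ) : ℂ := ∑' m, f2 p m z

lemma hasDerivAt_f0 (p m : ℕ) (z : ℂ) : HasDerivAt (f0 p m) (f1 p m z) z := by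
  have h := (((hasDerivAt_id z).div_const 2).pow (2*m+p)).const_mul (c p m)
  refine h.congr_deriv ?_
  simp only [f1, id]
  ring

lemma hasDerivAt_f1 (p m : ℕ) (z : ℂ) : HasDerivAt (f1 p m) (f2 p m z) z := by
  have h := (((hasDerivAt_id z).div_const 2).pow (2*m+p-1)).const_mul
    (c p m * (((2 * m + p : ℕ) : ℂ) / 2))
  refine h.congr_deriv ?_
  simp only [f2, Nat.sub_sub, id]
  ring

/-- generic: differentiate a series with our master bound -/
lemma hasDerivAt_tsum_gen (p : ℕ) (F G : ℕ → ℂ → ℂ)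
    (hd : ∀ m y, HasDerivAt (F m) (G m y) y)
    (hFb : ∀ (R : ℝ), 1 ≤ R → ∀ m (y : ℂ), ‖y‖ ≤ R → ‖F m y‖ ≤ B p R m)
    (hGb : ∀ (R : ℝ), 1 ≤ R → ∀ m (y : ℂ), ‖y‖ ≤ R → ‖G m y‖ ≤ B p R m) (z : ℂ) :
    HasDerivAt (fun w => ∑' m, F m w) (∑' m, G m z) z := by
  set R := ‖z‖ + 1 with hRdef
  have hR : 1 ≤ R := by simp only [hRdef]; have := norm_nonneg z; linarith
  have hball : ∀ y : ℂ, y ∈ Metric.ball (0:ℂ) R → ‖y‖ ≤ R := by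
    intro y hy; rw [Metric.mem_ball, dist_zero_right] at hy; linarith
  refine hasDerivAt_tsum_of_isPreconnected (y₀ := 0) (summable_B p R) Metric.isOpen_ball
    ((convex_ball (0:ℂ) R).isPreconnected) (fun m y _ => hd m y)
    (fun m y hy => hGb R hR m y (hball y hy)) ?_ ?_ ?_
  · exact Metric.mem_ball_self (by linarith)
  · exact Summable.of_norm_bounded (summable_B p R)
      (fun m => hFb R hR m 0 (by simp only [norm_zero]; linarith))
  · rw [Metric.mem_ball, dist_zero_right]; simp [hRdef]

end Bx

namespace Bx
lemma summable_f0 (p : ℕ) (z : ℂ) : Summable (fun m => f0 p m z) :=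
  Summable.of_norm_bounded (summable_B p (‖z‖+1))
    (fun m => bound0 p m (by have := norm_nonneg z; linarith) (by linarith))

lemma summable_f1 (p : ℕ) (z : ℂ) : Summable (fun m => f1 p m z) :=
  Summable.of_norm_bounded (summable_B p (‖z‖+1))
    (fun m => bound1 p m (by have := norm_nonneg z; linarith) (by linarith))

lemma summable_f2 (p : ℕ) (z : ℂ) : Summable (fun m => f2 p m z) :=
  Summable.of_norm_bounded (summable_B p (‖z‖+1))
    (fun m => bound2 p m (by have := norm_nonneg z; linarith) (by linarith))

lemma hasDerivAt_besselJ (p : ℕ) (z : ℂ) : HasDerivAt (besselJ p) (J1 p z) z := by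
  rw [show besselJ p = fun w => ∑' m, f0 p m w from rfl]
  exact hasDerivAt_tsum_gen p (f0 p) (f1 p) (hasDerivAt_f0 p)
    (fun R hR m y hy => bound0 p m hR hy) (fun R hR m y hy => bound1 p m hR hy) z

lemma hasDerivAt_J1 (p : ℕ) (z : ℂ) : HasDerivAt (J1 p) (J2 p z) z := by
  rw [show J1 p = fun w => ∑' m, f1 p m w from rfl]
  exact hasDerivAt_tsum_gen p (f1 p) (f2 p) (hasDerivAt_f1 p)
    (fun R hR m y hy => bound1 p m hR hy) (fun R hR m y hy => bound2 p m hR hy) z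

lemma besselJ'_eq (p : ℕ) (z : ℂ) : besselJ' p z = J1 p z :=
  (hasDerivAt_besselJ p z).deriv

lemma aux2 (a z : ℂ) (k : ℕ) :
    z^2 * (a * ((k:ℂ) * ((k-1 : ℕ):ℂ)/4) * (z/2)^(k-2)) = a * ((k*(k-1) : ℕ):ℂ) * (z/2)^k := by
  match k with
  | 0 => simp
  | 1 => simp
  | (j+2) =>
    have e1 : j+2-1 = j+1 := by omega
    have e2 : j+2-2 = j := by omega
    rw [e1, e2, pow_succ, pow_succ]; push_cast; ring

lemma aux1 (a z : ℂ) (k : ℕ) :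
    z * (a * ((k:ℂ)/2) * (z/2)^(k-1)) = a * (k:ℂ) * (z/2)^k := by
  match k with
  | 0 => simp
  | (j+1) => simp only [Nat.add_sub_cancel]; rw [pow_succ]; push_cast; ring

lemma nat_id (m p : ℕ) : (2*m+p) * ((2*m+p) - 1) + (2*m+p) = 4*m*(m+p) + p^2 := by
  rcases h' : 2*m+p with _ | j
  · have hm : m = 0 := by omega
    have hp : p = 0 := by omega
    simp [hm, hp]
  · have hz : (j:ℤ) + 1 = 2*m + p := by exact_mod_cast h'.symm
    simp only [Nat.add_sub_cancel]
    zify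
    linear_combination ((j:ℤ) + 1 + 2*m + p) * hz

lemma c_rec (p j : ℕ) : c p (j+1) * (((4*(j+1)*((j+1)+p) : ℕ)):ℂ) = -4 * c p j := by
  rw [c, c]
  have h1 : ((j+1).factorial : ℂ) = (j+1) * j.factorial := by
    push_cast [Nat.factorial_succ]; ring
  have h2 : (((j+1)+p).factorial : ℂ) = ((j+1)+p) * (j+p).factorial := by
    have : (j+1)+p = (j+p)+1 := by omega
    rw [this]
    push_cast [Nat.factorial_succ]; ring
  rw [h1, h2]
  have hj : (j.factorial : ℂ) ≠ 0 := by exact_mod_cast j.factorial_ne_zero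
  have hjp : ((j+p).factorial : ℂ) ≠ 0 := by exact_mod_cast (j+p).factorial_ne_zero
  have hj1 : ((j:ℂ)+1) ≠ 0 := by
    intro h; have := congrArg Complex.re h; push_cast at this; norm_num at this; linarith [Nat.cast_nonneg (α := ℝ) j]
  have hjp1 : ((j:ℂ)+1+p) ≠ 0 := by
    intro h; have := congrArg Complex.re h; push_cast at this; norm_num at this
    nlinarith [Nat.cast_nonneg (α := ℝ) j, Nat.cast_nonneg (α := ℝ) p]
  field_simp
  push_cast
  ring

end Bx

namespace Bx

noncomputable def gtm (p : ℕ) (z : ℂ) (m : ℕ) : ℂ := 4 * c p m * (z/2)^(2*m+p+2)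
noncomputable def stm (p : ℕ) (z : ℂ) : ℕ → ℂ
  | 0 => 0
  | (j+1) => gtm p z j

lemma summable_gtm (p : ℕ) (z : ℂ) : Summable (gtm p z) := by
  have := (summable_f0 p z).mul_left (4*(z/2)^2)
  refine this.congr fun m => ?_
  simp only [gtm, f0, pow_add]; ring

lemma summable_stm (p : ℕ) (z : ℂ) : Summable (stm p z) := by
  apply (summable_nat_add_iff 1).mp
  exact (summable_gtm p z).congr fun m => rfl

lemma termwise (p m : ℕ) (z : ℂ) :
    z^2 * f2 p m z + z * f1 p m z + (z^2 - (p:ℂ)^2) * f0 p m z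
      = gtm p z m - stm p z m := by
  rw [f2, f1, aux2, aux1, f0]
  have hz2 : (z^2 - (p:ℂ)^2) * (c p m * (z/2)^(2*m+p))
      = 4 * c p m * (z/2)^(2*m+p+2) - (p:ℂ)^2 * c p m * (z/2)^(2*m+p) := by
    rw [pow_add]; ring
  rw [hz2]
  have hcoef : (((2*m+p)*((2*m+p)-1) : ℕ):ℂ) + ((2*m+p : ℕ):ℂ) - (p:ℂ)^2
      = ((4*m*(m+p) : ℕ):ℂ) := by
    have h := nat_id m p
    have : (((2*m+p)*((2*m+p)-1) + (2*m+p) : ℕ):ℂ) = ((4*m*(m+p) + p^2 : ℕ):ℂ) := by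
      exact_mod_cast congrArg (Nat.cast : ℕ → ℂ) h
    push_cast at this ⊢
    linear_combination this
  have key : c p m * (((2*m+p)*((2*m+p)-1) : ℕ):ℂ) * (z/2)^(2*m+p)
        + c p m * ((2*m+p : ℕ):ℂ) * (z/2)^(2*m+p)
        - (p:ℂ)^2 * c p m * (z/2)^(2*m+p)
      = c p m * ((4*m*(m+p) : ℕ):ℂ) * (z/2)^(2*m+p) := by
    rw [← hcoef]; push_cast; ring
  have hs : c p m * ((4*m*(m+p) : ℕ):ℂ) * (z/2)^(2*m+p) = - stm p z m := by
    match m with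
    | 0 => simp [stm]
    | (j+1) =>
      have he : 2*(j+1)+p = 2*j+p+2 := by omega
      rw [stm, gtm, he]
      have := c_rec p j
      push_cast at this ⊢
      linear_combination (z/2)^(2*j+p+2) * this
  rw [gtm]
  linear_combination key + hs

lemma ode (p : ℕ) (z : ℂ) :
    z^2 * J2 p z + z * J1 p z + (z^2 - (p:ℂ)^2) * besselJ p z = 0 := by
  have h2 : Summable fun m => z^2 * f2 p m z := (summable_f2 p z).mul_left _
  have h1 : Summable fun m => z * f1 p m z := (summable_f1 p z).mul_left _
  have h0 : Summable fun m => (z^2 - (p:ℂ)^2) * f0 p m z := (summable_f0 p z).mul_left _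
  calc z^2 * J2 p z + z * J1 p z + (z^2 - (p:ℂ)^2) * besselJ p z
      = (∑' m, z^2 * f2 p m z) + (∑' m, z * f1 p m z)
          + (∑' m, (z^2 - (p:ℂ)^2) * f0 p m z) := by
        rw [J1, J2, show besselJ p z = ∑' m, f0 p m z from rfl,
          tsum_mul_left, tsum_mul_left, tsum_mul_left]
    _ = ∑' m, (z^2 * f2 p m z + z * f1 p m z + (z^2 - (p:ℂ)^2) * f0 p m z) := by
        rw [Summable.tsum_add (h2.add h1) h0, Summable.tsum_add h2 h1]
    _ = ∑' m, (gtm p z m - stm p z m) := tsum_congr fun m => termwise p m z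
    _ = (∑' m, gtm p z m) - (∑' m, stm p z m) :=
        Summable.tsum_sub (summable_gtm p z) (summable_stm p z)
    _ = 0 := by
        rw [Summable.tsum_eq_zero_add (summable_stm p z)]
        simp only [stm, zero_add, sub_self]

end Bx

namespace Bx

lemma continuous_besselJ (p : ℕ) : Continuous (besselJ p) :=
  Differentiable.continuous (fun z => (hasDerivAt_besselJ p z).differentiableAt)

lemma continuous_J1 (p : ℕ) : Continuous (J1 p) :=
  Differentiable.continuous (fun z => (hasDerivAt_J1 p z).differentiableAt)

lemma pJ0 (p : ℕ) : (p:ℂ)^2 * (besselJ p 0)^2 = 0 := by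
  match p with
  | 0 => simp
  | (q+1) =>
    have h : besselJ (q+1) (0:ℂ) = 0 := by
      rw [show besselJ (q+1) (0:ℂ) = ∑' m, f0 (q+1) m 0 from rfl]
      have h0 : ∀ m, f0 (q+1) m (0:ℂ) = 0 := by
        intro m
        rw [f0]
        rw [show ((0:ℂ)/2) = 0 by norm_num, zero_pow (by omega)]
        ring
      calc ∑' m, f0 (q+1) m (0:ℂ) = ∑' (_ : ℕ), (0:ℂ) := tsum_congr h0
        _ = 0 := tsum_zero
    rw [h]; ring

lemma lommel (p : ℕ) (μ : ℝ) (hμ : 0 < μ) :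
    ∫ r in (0:ℝ)..1, (besselJ p ((μ * r : ℝ):ℂ))^2 * (r:ℂ)
      = (J1 p (μ:ℂ))^2/2
        + (((μ:ℂ)^2 - (p:ℂ)^2)/(2*(μ:ℂ)^2)) * (besselJ p (μ:ℂ))^2 := by
  have hμc : (μ:ℂ) ≠ 0 := Complex.ofReal_ne_zero.mpr hμ.ne'
  have hmul : ∀ r : ℝ, HasDerivAt (fun t : ℝ => μ * t) μ r := by
    intro r; simpa using (hasDerivAt_id r).const_mul μ
  have hu : ∀ r : ℝ, HasDerivAt (fun t : ℝ => besselJ p ((μ * t : ℝ):ℂ))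
      ((μ:ℂ) * J1 p ((μ*r:ℝ):ℂ)) r := by
    intro r
    have h1 : HasDerivAt (fun t : ℝ => besselJ p (t:ℂ)) (J1 p ((μ*r:ℝ):ℂ)) (μ*r) :=
      (hasDerivAt_besselJ p _).comp_ofReal
    have h3 := h1.scomp r (hmul r)
    simpa only [Complex.real_smul, Function.comp_def, mul_comm] using h3
  have hv : ∀ r : ℝ, HasDerivAt (fun t : ℝ => J1 p ((μ * t : ℝ):ℂ))
      ((μ:ℂ) * J2 p ((μ*r:ℝ):ℂ)) r := by
    intro r
    have h1 : HasDerivAt (fun t : ℝ => J1 p (t:ℂ)) (J2 p ((μ*r:ℝ):ℂ)) (μ*r) :=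
      (hasDerivAt_J1 p _).comp_ofReal
    have h3 := h1.scomp r (hmul r)
    simpa only [Complex.real_smul, Function.comp_def, mul_comm] using h3
  have hr : ∀ r : ℝ, HasDerivAt (fun t : ℝ => (t:ℂ)) 1 r := by
    intro r
    exact HasDerivAt.congr_deriv (hasDerivAt_id r).ofReal_comp (by simp)
  set H : ℝ → ℂ := fun r =>
    (((r:ℂ) * (r:ℂ)) * (μ:ℂ)^2 * (J1 p ((μ*r:ℝ):ℂ) * J1 p ((μ*r:ℝ):ℂ))
      + ((μ:ℂ)^2 * ((r:ℂ) * (r:ℂ)) - (p:ℂ)^2)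
        * (besselJ p ((μ*r:ℝ):ℂ) * besselJ p ((μ*r:ℝ):ℂ))) / (2 * (μ:ℂ)^2)
    with hHdef
  have hH : ∀ r : ℝ, HasDerivAt H ((besselJ p ((μ*r:ℝ):ℂ))^2 * (r:ℂ)) r := by
    intro r
    have hr2 := (hr r).mul (hr r)
    have hu2 := (hu r).mul (hu r)
    have hv2 := (hv r).mul (hv r)
    have hA := (hr2.mul_const ((μ:ℂ)^2)).mul hv2
    have hB := ((hr2.const_mul ((μ:ℂ)^2)).sub_const ((p:ℂ)^2)).mul hu2
    have hAll := (hA.add hB).div_const (2*(μ:ℂ)^2)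
    refine HasDerivAt.congr_deriv hAll (Eq.symm ?_)
    simp only [Pi.mul_apply]
    have hode := ode p ((μ*r:ℝ):ℂ)
    have hz : ((μ*r:ℝ):ℂ) = (μ:ℂ)*(r:ℂ) := by push_cast; ring
    rw [hz] at hode ⊢
    rw [eq_div_iff (by intro h; apply hμc; simpa using h : 2*(μ:ℂ)^2 ≠ 0)]
    linear_combination (-2*(μ:ℂ)*(J1 p ((μ:ℂ)*(r:ℂ)))) * hode
  have hcont : Continuous fun r : ℝ => (besselJ p ((μ*r:ℝ):ℂ))^2 * (r:ℂ) := by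
    apply Continuous.mul
    · exact (((continuous_besselJ p).comp
        (Complex.continuous_ofReal.comp (continuous_const.mul continuous_id))).pow 2)
    · exact Complex.continuous_ofReal
  have hFTC := intervalIntegral.integral_eq_sub_of_hasDerivAt
    (f := H) (a := (0:ℝ)) (b := 1) (fun x _ => hH x) (hcont.intervalIntegrable 0 1)
  rw [hFTC]
  have hH0 : H 0 = 0 := by
    rw [hHdef]
    simp only [mul_zero, Complex.ofReal_zero]
    have := pJ0 p
    field_simp
    first
    | linear_combination 2 * this
    | linear_combination -this
    | linear_combination this
    | linear_combination -2 * this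
  have hH1 : H 1 = (J1 p (μ:ℂ))^2/2
      + (((μ:ℂ)^2 - (p:ℂ)^2)/(2*(μ:ℂ)^2)) * (besselJ p (μ:ℂ))^2 := by
    rw [hHdef]
    simp only [mul_one, Complex.ofReal_one]
    field_simp
  rw [hH0, hH1]
  ring

end Bx

/-- the weighted energy integral of a real ITE eigenfunction pair. -/
theorem stmt_0 (p : ℕ) (κ n α : ℝ) (hκ : 0 < κ) (hn : 0 < n) (hn1 : n ≠ 1)
    (hbc1 : besselJ p (κ : ℂ) = (α : ℂ) * besselJ p ((Real.sqrt n * κ : ℝ) : ℂ))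
    (hbc2 : besselJ' p (κ : ℂ) = (α : ℂ) * (Real.sqrt n : ℂ) * besselJ' p ((Real.sqrt n * κ : ℝ) : ℂ)) :
    ∫ r in (0:ℝ)..1,
        ((besselJ p ((κ * r : ℝ) : ℂ)) ^ 2
          - (n : ℂ) * (α : ℂ) ^ 2 * (besselJ p ((Real.sqrt n * κ * r : ℝ) : ℂ)) ^ 2) * (r : ℂ)
      = (((1 - n) / 2 : ℝ) : ℂ) * (besselJ p (κ : ℂ)) ^ 2 := by
  rw [Bx.besselJ'_eq, Bx.besselJ'_eq] at hbc2
  set μ : ℝ := Real.sqrt n * κ with hμdef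
  have hsn : 0 < Real.sqrt n := Real.sqrt_pos.mpr hn
  have hμ : 0 < μ := mul_pos hsn hκ
  have hcont : ∀ ν : ℝ, Continuous fun r : ℝ => (besselJ p ((ν*r:ℝ):ℂ))^2 * (r:ℂ) := by
    intro ν
    apply Continuous.mul
    · exact (((Bx.continuous_besselJ p).comp
        (Complex.continuous_ofReal.comp (continuous_const.mul continuous_id))).pow 2)
    · exact Complex.continuous_ofReal
  have hsplit : (∫ r in (0:ℝ)..1,
        ((besselJ p ((κ * r : ℝ) : ℂ)) ^ 2
          - (n : ℂ) * (α : ℂ) ^ 2 * (besselJ p ((μ * r : ℝ) : ℂ)) ^ 2) * (r : ℂ))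
      = (∫ r in (0:ℝ)..1, (besselJ p ((κ*r:ℝ):ℂ))^2 * (r:ℂ))
        - (n : ℂ) * (α : ℂ)^2 * (∫ r in (0:ℝ)..1, (besselJ p ((μ*r:ℝ):ℂ))^2 * (r:ℂ)) := by
    rw [← intervalIntegral.integral_const_mul,
      ← intervalIntegral.integral_sub ((hcont κ).intervalIntegrable 0 1)
        (((hcont μ).intervalIntegrable 0 1).const_mul _)]
    apply intervalIntegral.integral_congr
    intro x hx
    ring
  rw [hsplit, Bx.lommel p κ hκ, Bx.lommel p μ hμ]
  have hκc : (κ:ℂ) ≠ 0 := Complex.ofReal_ne_zero.mpr hκ.ne'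
  have hnc : (n:ℂ) ≠ 0 := Complex.ofReal_ne_zero.mpr hn.ne'
  have hμeq : ((μ:ℝ):ℂ) = (Real.sqrt n : ℂ) * (κ:ℂ) := by rw [hμdef]; push_cast; ring
  have hs2 : ((Real.sqrt n : ℝ):ℂ)^2 = (n:ℂ) := by
    have : (Real.sqrt n)^2 = n := Real.sq_sqrt hn.le
    exact_mod_cast congrArg (fun x : ℝ => (x:ℂ)) this
  rw [hbc1, hbc2, hμeq]
  push_cast
  have hsc : ((Real.sqrt n : ℝ):ℂ) ≠ 0 := Complex.ofReal_ne_zero.mpr hsn.ne'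
  rw [← hs2]
  field_simp
  ring_nf
end

section
/- Let p ≥ 0 be an integer, let n > 0 be real with n ≠ 1, let κ ∈ ℂ with κ ∉ ℝ, and let α ∈ ℂ, α ≠ 0, satisfy the transmission boundary conditions J_p(κ) = α·J_p(√n·κ) and J_p'(κ) = α·√n·J_p'(√n·κ). Then ∫₀¹ ( |J_p(κ·r)|² − n·|α|²·|J_p(√n·κ·r)|² )·r dr = 0. -/
open Complex Real Filter Set MeasureTheory

noncomputable def cc (p m : ℕ) : ℂ :=
  (-1 : ℂ) ^ m / ((Nat.factorial m : ℂ) * (Nat.factorial (m + p) : ℂ)) / 2 ^ (2 * m + p)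

lemma norm_cc (p m : ℕ) :
    ‖cc p m‖ = ((Nat.factorial m : ℝ) * (Nat.factorial (m + p) : ℝ) * 2 ^ (2 * m + p))⁻¹ := by
  rw [cc, norm_div, norm_div, norm_pow, norm_pow, norm_neg, norm_one, one_pow, norm_mul]
  rw [Complex.norm_natCast, Complex.norm_natCast, show ‖(2:ℂ)‖ = 2 from Complex.norm_ofNat 2]
  rw [one_div, div_eq_mul_inv, ← mul_inv]

lemma ubound_summable (p : ℕ) (R : ℝ) :
    Summable (fun m : ℕ => 2 ^ p * R ^ p * ((4 * R ^ 2) ^ m / (Nat.factorial m : ℝ))) :=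
  (Real.summable_pow_div_factorial (4 * R ^ 2)).mul_left _

lemma bound_aux (p m e N : ℕ) (hN : (N : ℝ) ≤ 4 ^ (2 * m + p)) (he : e ≤ 2 * m + p)
    (z : ℂ) (R : ℝ) (hR : 1 ≤ R) (hz : ‖z‖ ≤ R) :
    ‖cc p m‖ * N * ‖z‖ ^ e ≤ 2 ^ p * R ^ p * ((4 * R ^ 2) ^ m / (Nat.factorial m : ℝ)) := by
  have h2 : (0:ℝ) < 2 ^ (2 * m + p) := by positivity
  have hfac : (1:ℝ) ≤ (Nat.factorial (m + p) : ℝ) := Nat.one_le_cast.mpr (Nat.factorial_pos _)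
  have hzR : ‖z‖ ^ e ≤ R ^ (2 * m + p) := by
    calc ‖z‖ ^ e ≤ R ^ e := by gcongr
    _ ≤ R ^ (2 * m + p) := pow_le_pow_right₀ hR he
  have hcc : ‖cc p m‖ ≤ ((Nat.factorial m : ℝ) * 2 ^ (2 * m + p))⁻¹ := by
    rw [norm_cc]
    apply inv_anti₀ (by positivity)
    calc (Nat.factorial m : ℝ) * 2 ^ (2*m+p) = (Nat.factorial m : ℝ) * 1 * 2 ^ (2*m+p) := by ring
    _ ≤ (Nat.factorial m : ℝ) * (Nat.factorial (m+p) : ℝ) * 2 ^ (2*m+p) := by gcongr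
  have key : ((Nat.factorial m : ℝ) * 2 ^ (2*m+p))⁻¹ * 4 ^ (2*m+p) * R ^ (2*m+p)
      = 2 ^ p * R ^ p * ((4 * R ^ 2) ^ m / (Nat.factorial m : ℝ)) := by
    have hm : (0:ℝ) < (Nat.factorial m : ℝ) := by exact_mod_cast Nat.factorial_pos m
    have h2k : (4:ℝ)^(2*m+p) = 2^(2*m+p) * 2^(2*m+p) := by
      rw [show (4:ℝ) = 2*2 by norm_num, mul_pow]
    have h3 : (2:ℝ)^(2*m+p) * R^(2*m+p) = 2^p * R^p * (4*R^2)^m := by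
      rw [show (4:ℝ) = 2*2 by norm_num, pow_add, pow_add, pow_mul, pow_mul, mul_pow]
      ring
    rw [mul_inv, h2k]
    have hc : (((2:ℝ)^(2*m+p))⁻¹) * ((2:ℝ)^(2*m+p) * 2^(2*m+p)) = 2^(2*m+p) := by
      rw [← mul_assoc, inv_mul_cancel₀ h2.ne', one_mul]
    calc ((Nat.factorial m:ℝ)⁻¹ * ((2:ℝ)^(2*m+p))⁻¹) * ((2:ℝ)^(2*m+p)*2^(2*m+p)) * R^(2*m+p)
        = (Nat.factorial m:ℝ)⁻¹ * (((2:ℝ)^(2*m+p))⁻¹ * ((2:ℝ)^(2*m+p)*2^(2*m+p))) * R^(2*m+p) := by ring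
      _ = (Nat.factorial m:ℝ)⁻¹ * ((2:ℝ)^(2*m+p) * R^(2*m+p)) := by rw [hc]; ring
      _ = 2^p*R^p*((4*R^2)^m/(Nat.factorial m:ℝ)) := by rw [h3]; ring
  calc ‖cc p m‖ * N * ‖z‖ ^ e
      ≤ ((Nat.factorial m : ℝ) * 2 ^ (2*m+p))⁻¹ * 4 ^ (2*m+p) * R ^ (2*m+p) := by
        apply mul_le_mul (mul_le_mul hcc hN (by positivity) (by positivity)) hzR (by positivity) (by positivity)
    _ = _ := key

noncomputable def t0 (p m : ℕ) (z : ℂ) : ℂ := cc p m * z ^ (2 * m + p)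
noncomputable def t1 (p m : ℕ) (z : ℂ) : ℂ := cc p m * ((2 * m + p : ℕ) * z ^ (2 * m + p - 1))
noncomputable def t2 (p m : ℕ) (z : ℂ) : ℂ :=
  cc p m * ((2 * m + p : ℕ) * ((2 * m + p - 1 : ℕ) * z ^ (2 * m + p - 1 - 1)))

lemma besselJ_eq (p : ℕ) (z : ℂ) : besselJ p z = ∑' m, t0 p m z := by
  refine tsum_congr fun m => ?_
  rw [t0, cc, div_pow, div_div]
  ring

lemma norm_t0 (p m : ℕ) (z : ℂ) : ‖t0 p m z‖ = ‖cc p m‖ * 1 * ‖z‖ ^ (2*m+p) := by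
  rw [t0, norm_mul, norm_pow]; ring

lemma norm_t1 (p m : ℕ) (z : ℂ) : ‖t1 p m z‖ = ‖cc p m‖ * (2*m+p : ℕ) * ‖z‖ ^ (2*m+p-1) := by
  rw [t1, norm_mul, norm_mul, norm_pow, Complex.norm_natCast]; ring

lemma norm_t2 (p m : ℕ) (z : ℂ) :
    ‖t2 p m z‖ = ‖cc p m‖ * ((2*m+p) * (2*m+p-1) : ℕ) * ‖z‖ ^ (2*m+p-1-1) := by
  rw [t2, norm_mul, norm_mul, norm_mul, norm_pow, Complex.norm_natCast, Complex.norm_natCast]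
  push_cast; ring


lemma hN1 (p m : ℕ) : ((2*m+p : ℕ) : ℝ) ≤ 4 ^ (2*m+p) := by
  have h : (2*m+p) ≤ 4^(2*m+p) :=
    (Nat.lt_two_pow_self).le.trans (Nat.pow_le_pow_left (by norm_num) _)
  calc ((2*m+p:ℕ):ℝ) ≤ ((4^(2*m+p):ℕ):ℝ) := Nat.cast_le.2 h
    _ = 4^(2*m+p) := by push_cast; ring

lemma hN2 (p m : ℕ) : (((2*m+p) * (2*m+p-1) : ℕ) : ℝ) ≤ 4 ^ (2*m+p) := by
  have h : (2*m+p) * (2*m+p-1) ≤ 4^(2*m+p) := by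
    calc (2*m+p) * (2*m+p-1) ≤ 2^(2*m+p) * 2^(2*m+p) :=
          Nat.mul_le_mul (Nat.lt_two_pow_self).le ((Nat.sub_le _ _).trans (Nat.lt_two_pow_self).le)
      _ = 4^(2*m+p) := by rw [← Nat.mul_pow]
  calc (((2*m+p)*(2*m+p-1):ℕ):ℝ) ≤ ((4^(2*m+p):ℕ):ℝ) := Nat.cast_le.2 h
    _ = 4^(2*m+p) := by push_cast; ring

lemma bnd0 (p m : ℕ) {z : ℂ} {R : ℝ} (hR : 1 ≤ R) (hz : ‖z‖ ≤ R) :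
    ‖t0 p m z‖ ≤ 2 ^ p * R ^ p * ((4 * R ^ 2) ^ m / (Nat.factorial m : ℝ)) := by
  rw [norm_t0]
  simpa using bound_aux p m (2*m+p) 1
    (by simpa using one_le_pow₀ (by norm_num : (1:ℝ) ≤ 4) (n := 2*m+p)) le_rfl z R hR hz

lemma bnd1 (p m : ℕ) {z : ℂ} {R : ℝ} (hR : 1 ≤ R) (hz : ‖z‖ ≤ R) :
    ‖t1 p m z‖ ≤ 2 ^ p * R ^ p * ((4 * R ^ 2) ^ m / (Nat.factorial m : ℝ)) := by
  rw [norm_t1]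
  exact bound_aux p m (2*m+p-1) (2*m+p) (hN1 p m) (Nat.sub_le _ _) z R hR hz

lemma bnd2 (p m : ℕ) {z : ℂ} {R : ℝ} (hR : 1 ≤ R) (hz : ‖z‖ ≤ R) :
    ‖t2 p m z‖ ≤ 2 ^ p * R ^ p * ((4 * R ^ 2) ^ m / (Nat.factorial m : ℝ)) := by
  rw [norm_t2]
  exact bound_aux p m (2*m+p-1-1) _ (hN2 p m) ((Nat.sub_le _ _).trans (Nat.sub_le _ _)) z R hR hz

lemma summable_t0 (p : ℕ) (z : ℂ) : Summable (fun m => t0 p m z) :=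
  Summable.of_norm_bounded (ubound_summable p (‖z‖+1))
    (fun m => bnd0 p m (by linarith [norm_nonneg z]) (by linarith))

lemma summable_t1 (p : ℕ) (z : ℂ) : Summable (fun m => t1 p m z) :=
  Summable.of_norm_bounded (ubound_summable p (‖z‖+1))
    (fun m => bnd1 p m (by linarith [norm_nonneg z]) (by linarith))

lemma summable_t2 (p : ℕ) (z : ℂ) : Summable (fun m => t2 p m z) :=
  Summable.of_norm_bounded (ubound_summable p (‖z‖+1))
    (fun m => bnd2 p m (by linarith [norm_nonneg z]) (by linarith))

noncomputable def J1 (p : ℕ) (z : ℂ) : ℂ := ∑' m, t1 p m z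
noncomputable def J2 (p : ℕ) (z : ℂ) : ℂ := ∑' m, t2 p m z

lemma hasDerivAt_t0 (p m : ℕ) (y : ℂ) : HasDerivAt (fun z => t0 p m z) (t1 p m y) y := by
  have := (hasDerivAt_pow (2*m+p) y).const_mul (cc p m)
  simpa [t0, t1] using this

lemma hasDerivAt_t1 (p m : ℕ) (y : ℂ) : HasDerivAt (fun z => t1 p m z) (t2 p m y) y := by
  have := (hasDerivAt_pow (2*m+p-1) y).const_mul (cc p m * (2*m+p : ℕ))
  have h2 : (fun z : ℂ => cc p m * (2*m+p:ℕ) * z ^ (2*m+p-1)) = fun z => t1 p m z := by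
    funext z; rw [t1]; ring
  rw [h2] at this
  exact this.congr_deriv (by rw [t2]; ring)

lemma hasDerivAt_besselJ (p : ℕ) (z : ℂ) : HasDerivAt (besselJ p) (J1 p z) z := by
  have hball : z ∈ Metric.ball (0:ℂ) (‖z‖+1) := by
    simp [Metric.mem_ball, dist_zero_right]
  have h := hasDerivAt_tsum_of_isPreconnected (ubound_summable p (‖z‖+1))
    Metric.isOpen_ball ((convex_ball (0:ℂ) (‖z‖+1)).isPreconnected)
    (fun m y _ => hasDerivAt_t0 p m y)
    (fun m y hy => bnd1 p m (by linarith [norm_nonneg z])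
      (le_of_lt (by simpa [Metric.mem_ball, dist_zero_right] using hy)))
    (by simp [Metric.mem_ball]; positivity)
    (summable_t0 p 0) hball
  rw [show besselJ p = fun z => ∑' m, t0 p m z from funext (besselJ_eq p)]
  exact h

lemma hasDerivAt_J1 (p : ℕ) (z : ℂ) : HasDerivAt (J1 p) (J2 p z) z := by
  have hball : z ∈ Metric.ball (0:ℂ) (‖z‖+1) := by
    simp [Metric.mem_ball, dist_zero_right]
  have h := hasDerivAt_tsum_of_isPreconnected (ubound_summable p (‖z‖+1))
    Metric.isOpen_ball ((convex_ball (0:ℂ) (‖z‖+1)).isPreconnected)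
    (fun m y _ => hasDerivAt_t1 p m y)
    (fun m y hy => bnd2 p m (by linarith [norm_nonneg z])
      (le_of_lt (by simpa [Metric.mem_ball, dist_zero_right] using hy)))
    (by simp [Metric.mem_ball]; positivity)
    (summable_t1 p 0) hball
  exact h

lemma besselJ'_eq (p : ℕ) (z : ℂ) : besselJ' p z = J1 p z :=
  (hasDerivAt_besselJ p z).deriv

lemma continuous_besselJ (p : ℕ) : Continuous (besselJ p) := by
  have : Differentiable ℂ (besselJ p) := fun z => (hasDerivAt_besselJ p z).differentiableAt
  exact this.continuous

lemma continuous_J1 (p : ℕ) : Continuous (J1 p) := by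
  have : Differentiable ℂ (J1 p) := fun z => (hasDerivAt_J1 p z).differentiableAt
  exact this.continuous

lemma cc_rec (p m : ℕ) : (4*((m:ℂ)+1)*((m:ℂ)+1+p)) * cc p (m+1) = - cc p m := by
  have h1 : (((m+1).factorial : ℕ) : ℂ) = ((m:ℂ)+1) * (m.factorial : ℂ) := by
    push_cast [Nat.factorial_succ]; ring
  have h2 : (((m+1+p).factorial : ℕ) : ℂ) = ((m:ℂ)+1+p) * ((m+p).factorial : ℂ) := by
    rw [show m+1+p = (m+p)+1 by ring]; push_cast [Nat.factorial_succ]; ring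
  rw [cc, cc, h1, h2, show 2*(m+1)+p = (2*m+p)+1+1 by ring, pow_succ, pow_succ, pow_succ]
  have hm : ((m.factorial : ℕ) : ℂ) ≠ 0 := Nat.cast_ne_zero.2 (Nat.factorial_ne_zero m)
  have hmp : (((m+p).factorial : ℕ) : ℂ) ≠ 0 := Nat.cast_ne_zero.2 (Nat.factorial_ne_zero _)
  have h2z : (2:ℂ) ≠ 0 := two_ne_zero
  have hm1 : ((m:ℂ)+1) ≠ 0 := Nat.cast_add_one_ne_zero m
  have hmp1 : ((m:ℂ)+1+p) ≠ 0 := by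
    have : ((m+1+p : ℕ) : ℂ) ≠ 0 := Nat.cast_ne_zero.2 (by omega)
    push_cast at this; exact this
  have h2p : ((2:ℂ))^(2*m+p) ≠ 0 := pow_ne_zero _ h2z
  field_simp
  ring

lemma term_ode (p m : ℕ) (z : ℂ) :
    z^2 * t2 p m z + z * t1 p m z - (p:ℂ)^2 * t0 p m z
      = cc p m * (4*(m:ℂ)*((m:ℂ)+(p:ℂ))) * z^(2*m+p) := by
  rw [t0, t1, t2]
  rcases hk : 2*m+p with _ | _ | j
  · have hp : p = 0 := by omega
    have hm : m = 0 := by omega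
    subst hp; subst hm
    norm_num
  · have hp : p = 1 := by omega
    have hm : m = 0 := by omega
    subst hp; subst hm
    norm_num
    ring
  · have hc : ((j:ℂ)+2) = 2*(m:ℂ)+(p:ℂ) := by
      have h : ((2*m+p : ℕ):ℂ) = ((j+1+1 : ℕ):ℂ) := by rw [hk]
      push_cast at h; linear_combination -h
    simp only [Nat.add_sub_cancel]
    push_cast
    linear_combination (cc p m * z^(j+2) * ((j:ℂ)+2+2*(m:ℂ)+(p:ℂ))) * hc

lemma besselJ_ode (p : ℕ) (z : ℂ) :
    z^2 * J2 p z + z * J1 p z + (z^2 - (p:ℂ)^2) * besselJ p z = 0 := by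
  have s0 := summable_t0 p z
  have s1 := summable_t1 p z
  have s2 := summable_t2 p z
  set g : ℕ → ℂ := fun m => cc p m * (4*(m:ℂ)*((m:ℂ)+(p:ℂ))) * z^(2*m+p) with hg
  have hsum_g : Summable g := by
    have h : Summable (fun m => z^2 * t2 p m z + z * t1 p m z - (p:ℂ)^2 * t0 p m z) :=
      ((s2.mul_left (z^2)).add (s1.mul_left z)).sub (s0.mul_left ((p:ℂ)^2))
    exact h.congr fun m => term_ode p m z
  have hterm : ∀ m, z^2 * t2 p m z + z * t1 p m z + (z^2 - (p:ℂ)^2) * t0 p m z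
      = g m + z^2 * t0 p m z := by
    intro m
    have h := term_ode p m z
    rw [hg]
    linear_combination h
  have e1 : ∑' m, (z^2 * t2 p m z + z * t1 p m z + (z^2-(p:ℂ)^2) * t0 p m z)
      = z^2 * J2 p z + z * J1 p z + (z^2-(p:ℂ)^2) * besselJ p z := by
    rw [Summable.tsum_add ((s2.mul_left _).add (s1.mul_left _)) (s0.mul_left _),
      Summable.tsum_add (s2.mul_left _) (s1.mul_left _), tsum_mul_left, tsum_mul_left, tsum_mul_left,
      besselJ_eq, J1, J2]
  have e2 : ∑' m, (z^2 * t2 p m z + z * t1 p m z + (z^2-(p:ℂ)^2) * t0 p m z)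
      = (∑' m, g m) + z^2 * ∑' m, t0 p m z := by
    rw [tsum_congr hterm, Summable.tsum_add hsum_g (s0.mul_left _), tsum_mul_left]
  have e3 : ∑' m, g m = - (z^2 * ∑' m, t0 p m z) := by
    rw [Summable.tsum_eq_zero_add hsum_g]
    have g0 : g 0 = 0 := by simp [hg]
    have gshift : ∀ m : ℕ, g (m+1) = -(z^2 * t0 p m z) := by
      intro m
      have h := cc_rec p m
      rw [hg]
      simp only []
      rw [t0, show 2*(m+1)+p = (2*m+p)+2 by ring, pow_add]
      push_cast
      linear_combination (z^(2*m+p) * z^2) * h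
    rw [g0, zero_add, tsum_congr gshift, tsum_neg, tsum_mul_left]
  rw [← e1, e2, e3]
  ring

lemma cc_conj (p m : ℕ) : (starRingEnd ℂ) (cc p m) = cc p m := by
  rw [cc]
  simp [map_div₀, Complex.conj_ofNat]

lemma besselJ_conj (p : ℕ) (z : ℂ) :
    besselJ p ((starRingEnd ℂ) z) = (starRingEnd ℂ) (besselJ p z) := by
  rw [besselJ_eq, besselJ_eq]
  have h : ∀ m, t0 p m ((starRingEnd ℂ) z) = (starRingEnd ℂ) (t0 p m z) := by
    intro m; rw [t0, t0, map_mul, map_pow, cc_conj]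
  rw [tsum_congr h]
  exact (tsum_star (f := fun m => t0 p m z)).symm

lemma J1_conj (p : ℕ) (z : ℂ) :
    J1 p ((starRingEnd ℂ) z) = (starRingEnd ℂ) (J1 p z) := by
  rw [J1, J1]
  have h : ∀ m, t1 p m ((starRingEnd ℂ) z) = (starRingEnd ℂ) (t1 p m z) := by
    intro m; rw [t1, t1, map_mul, map_mul, map_pow, cc_conj, Complex.conj_natCast]
  rw [tsum_congr h]
  exact (tsum_star (f := fun m => t1 p m z)).symm

lemma besselJ_zero (p : ℕ) (hp : p ≠ 0) : besselJ p 0 = 0 := by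
  rw [besselJ_eq]
  have h : ∀ m, t0 p m (0:ℂ) = 0 := by
    intro m; rw [t0, zero_pow (by omega), mul_zero]
  rw [tsum_congr h, tsum_zero]

lemma J1_zero : J1 0 0 = 0 := by
  rw [J1]
  have h : ∀ m, t1 0 m (0:ℂ) = 0 := by
    intro m
    rcases m with _ | q
    · simp [t1]
    · rw [t1, zero_pow (by omega), mul_zero, mul_zero]
  rw [tsum_congr h, tsum_zero]

lemma J0_mul_J1_zero (p : ℕ) : besselJ p 0 * J1 p 0 = 0 := by
  rcases Nat.eq_zero_or_pos p with hp | hp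
  · subst hp; rw [J1_zero, mul_zero]
  · rw [besselJ_zero p (by omega), zero_mul]

lemma hasDerivAt_J0_real (p : ℕ) (a : ℂ) (r : ℝ) :
    HasDerivAt (fun s : ℝ => besselJ p (a * ↑s)) (a * J1 p (a * ↑r)) r := by
  have h2 : HasDerivAt (fun w : ℂ => a * w) a (↑r : ℂ) := by
    simpa using (hasDerivAt_id (↑r:ℂ)).const_mul a
  have h1 : HasDerivAt (fun w : ℂ => besselJ p (a * w)) (J1 p (a * ↑r) * a) (↑r : ℂ) :=
    by have h3 := HasDerivAt.comp (↑r : ℂ) (hasDerivAt_besselJ p (a * ↑r)) h2; unfold Function.comp at h3; exact h3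
  have := h1.comp_ofReal
  simpa [mul_comm] using this

lemma hasDerivAt_J1_real (p : ℕ) (a : ℂ) (r : ℝ) :
    HasDerivAt (fun s : ℝ => J1 p (a * ↑s)) (a * J2 p (a * ↑r)) r := by
  have h2 : HasDerivAt (fun w : ℂ => a * w) a (↑r : ℂ) := by
    simpa using (hasDerivAt_id (↑r:ℂ)).const_mul a
  have h1 : HasDerivAt (fun w : ℂ => J1 p (a * w)) (J2 p (a * ↑r) * a) (↑r : ℂ) :=
    by have h3 := HasDerivAt.comp (↑r : ℂ) (hasDerivAt_J1 p (a * ↑r)) h2; unfold Function.comp at h3; exact h3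
  have := h1.comp_ofReal
  simpa [mul_comm] using this

lemma cont_aux (p : ℕ) (a : ℂ) : Continuous (fun r : ℝ => besselJ p (a * ↑r)) :=
  (continuous_besselJ p).comp (continuous_const.mul Complex.continuous_ofReal)

lemma lommel (p : ℕ) (a b : ℂ) :
    (∫ r in (0:ℝ)..1, ((b^2-a^2) * (r:ℂ) * besselJ p (a*↑r) * besselJ p (b*↑r)))
      = a * J1 p a * besselJ p b - b * besselJ p a * J1 p b := by
  set W : ℝ → ℂ := fun r =>
    ↑r * (a * J1 p (a*↑r) * besselJ p (b*↑r) - b * besselJ p (a*↑r) * J1 p (b*↑r)) with hWdef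
  have hW : ∀ r ∈ uIcc (0:ℝ) 1,
      HasDerivAt W ((b^2-a^2) * (r:ℝ) * besselJ p (a*↑r) * besselJ p (b*↑r)) r := by
    intro r _
    have hr : HasDerivAt (fun s : ℝ => (↑s : ℂ)) 1 r := by
      simpa using (hasDerivAt_id r).ofReal_comp
    have hA : HasDerivAt (fun s : ℝ => a * J1 p (a*↑s) * besselJ p (b*↑s) -
        b * besselJ p (a*↑s) * J1 p (b*↑s))
        ((a * (a * J2 p (a*↑r)) * besselJ p (b*↑r) + a * J1 p (a*↑r) * (b * J1 p (b*↑r)))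
          - (b * (a * J1 p (a*↑r)) * J1 p (b*↑r) + b * besselJ p (a*↑r) * (b * J2 p (b*↑r)))) r :=
      ((((hasDerivAt_J1_real p a r).const_mul a).mul (hasDerivAt_J0_real p b r)).sub
        (((hasDerivAt_J0_real p a r).const_mul b).mul (hasDerivAt_J1_real p b r)))
    have hfull := hr.mul hA
    have hE : (1 : ℂ) * (a * J1 p (a*↑r) * besselJ p (b*↑r) - b * besselJ p (a*↑r) * J1 p (b*↑r))
        + ↑r * ((a * (a * J2 p (a*↑r)) * besselJ p (b*↑r) + a * J1 p (a*↑r) * (b * J1 p (b*↑r)))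
          - (b * (a * J1 p (a*↑r)) * J1 p (b*↑r) + b * besselJ p (a*↑r) * (b * J2 p (b*↑r))))
        = (b^2-a^2) * (r:ℝ) * besselJ p (a*↑r) * besselJ p (b*↑r) := by
      by_cases hr0 : (r : ℂ) = 0
      · rw [hr0]
        have h0a : a * (0:ℂ) = 0 := mul_zero a
        have h0b : b * (0:ℂ) = 0 := mul_zero b
        rw [h0a, h0b]
        have := J0_mul_J1_zero p
        push_cast [show ((r:ℝ):ℂ) = 0 from hr0]  -- also ↑r on RHS
        linear_combination (a - b) * this
      · have hr2 : ((r:ℂ))^2 ≠ 0 := pow_ne_zero _ hr0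
        apply mul_left_cancel₀ hr2
        have odeA := besselJ_ode p (a*↑r)
        have odeB := besselJ_ode p (b*↑r)
        linear_combination ((r:ℂ) * besselJ p (b*↑r)) * odeA - ((r:ℂ) * besselJ p (a*↑r)) * odeB
    rw [hE] at hfull
    exact hfull
  have hint : IntervalIntegrable
      (fun r : ℝ => (b^2-a^2) * (r:ℂ) * besselJ p (a*↑r) * besselJ p (b*↑r)) volume 0 1 := by
    apply Continuous.intervalIntegrable
    exact ((continuous_const.mul Complex.continuous_ofReal).mul (cont_aux p a)).mul (cont_aux p b)
  have hftc := intervalIntegral.integral_eq_sub_of_hasDerivAt hW hint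
  rw [hftc, hWdef]
  push_cast
  simp

noncomputable def b0 (p m : ℕ) (x : ℝ) : ℝ :=
  x ^ (2*m+p) / ((Nat.factorial m : ℝ) * (Nat.factorial (m+p) : ℝ) * 2 ^ (2*m+p))

noncomputable def Ip (p : ℕ) (x : ℝ) : ℝ := ∑' m, b0 p m x

lemma abs_b0 (p m : ℕ) (x : ℝ) : |b0 p m x| = ‖cc p m‖ * 1 * |x| ^ (2*m+p) := by
  rw [b0, norm_cc, abs_div, _root_.abs_pow]
  have h : |(Nat.factorial m : ℝ) * (Nat.factorial (m+p) : ℝ) * 2 ^ (2*m+p)|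
      = (Nat.factorial m : ℝ) * (Nat.factorial (m+p) : ℝ) * 2 ^ (2*m+p) := by
    apply abs_of_pos; positivity
  rw [h]; ring

lemma summable_b0 (p : ℕ) (x : ℝ) : Summable (fun m => b0 p m x) := by
  apply Summable.of_norm_bounded (ubound_summable p (|x|+1))
  intro m
  rw [Real.norm_eq_abs, abs_b0]
  have h := bound_aux p m (2*m+p) 1 (by simpa using one_le_pow₀ (by norm_num : (1:ℝ) ≤ 4))
    le_rfl ((|x| : ℝ) : ℂ) (|x|+1) (by linarith [abs_nonneg x]) (by rw [Complex.norm_real, Real.norm_eq_abs, _root_.abs_abs]; linarith)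
  simpa [Complex.norm_real, _root_.abs_abs] using h

lemma Ip_pos (p : ℕ) {x : ℝ} (hx : 0 < x) : 0 < Ip p x := by
  apply Summable.tsum_pos (summable_b0 p x) (fun m => by rw [b0]; positivity) 0
  rw [b0]; positivity

lemma b0_neg (p m : ℕ) (x : ℝ) : b0 p m (-x) = (-1)^p * b0 p m x := by
  rw [b0, b0, neg_pow]
  have h : (-1:ℝ)^(2*m+p) = (-1)^p := by rw [pow_add, pow_mul]; norm_num
  rw [h]; ring

lemma Ip_neg (p : ℕ) (x : ℝ) : Ip p (-x) = (-1)^p * Ip p x := by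
  rw [Ip, Ip, tsum_congr (fun m => b0_neg p m x), tsum_mul_left]

lemma besselJ_I (p : ℕ) (s : ℝ) : besselJ p (I * ↑s) = I^p * ↑(Ip p s) := by
  rw [besselJ_eq]
  have hterm : ∀ m, t0 p m (I * ↑s) = I^p * ((b0 p m s : ℝ) : ℂ) := by
    intro m
    have hIpow : (I:ℂ)^(2*m+p) = (-1)^m * I^p := by
      rw [pow_add, pow_mul, I_sq]
    have h1 : ((-1:ℂ))^m * (-1)^m = 1 := by rw [← mul_pow]; norm_num
    calc t0 p m (I * ↑s)
        = ((-1:ℂ)^m * (-1)^m) * (I^p * (↑s)^(2*m+p) / ((Nat.factorial m : ℂ) * (Nat.factorial (m+p) : ℂ)) / 2^(2*m+p)) := by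
          rw [t0, cc, mul_pow, hIpow]; ring
      _ = I^p * ((b0 p m s : ℝ) : ℂ) := by rw [h1, b0]; push_cast; ring
  rw [tsum_congr hterm, tsum_mul_left, Ip, Complex.ofReal_tsum]

lemma Ip_mul_pos (p : ℕ) {c x : ℝ} (hc : 0 < c) (hx : x ≠ 0) : 0 < Ip p x * Ip p (c*x) := by
  rcases hx.lt_or_gt with h | h
  · have e1 : Ip p x = (-1)^p * Ip p (-x) := by
      rw [← Ip_neg p (-x), neg_neg]
    have e2 : Ip p (c*x) = (-1)^p * Ip p (-(c*x)) := by
      rw [← Ip_neg p (-(c*x)), neg_neg]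
    rw [e1, e2]
    have h1 : 0 < Ip p (-x) := Ip_pos p (by linarith)
    have h2 : 0 < Ip p (-(c*x)) := Ip_pos p (by nlinarith)
    have hsq : ((-1:ℝ)^p) * ((-1:ℝ)^p) = 1 := by
      rw [← mul_pow]; norm_num
    calc (0:ℝ) < Ip p (-x) * Ip p (-(c*x)) := by positivity
      _ = (-1)^p * Ip p (-x) * ((-1)^p * Ip p (-(c*x))) := by
          rw [show (-1:ℝ)^p * Ip p (-x) * ((-1:ℝ)^p * Ip p (-(c*x)))
            = ((-1:ℝ)^p * (-1)^p) * (Ip p (-x) * Ip p (-(c*x))) by ring, hsq, one_mul]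
  · exact mul_pos (Ip_pos p h) (Ip_pos p (by positivity))

/-- the weighted energy integral vanishes for non-real ITEs. -/
theorem stmt_1 (p : ℕ) (n : ℝ) (hn : 0 < n) (hn1 : n ≠ 1) (κ : ℂ) (hκ : κ.im ≠ 0)
    (α : ℂ) (hα : α ≠ 0)
    (hbc1 : besselJ p κ = α * besselJ p ((Real.sqrt n : ℂ) * κ))
    (hbc2 : besselJ' p κ = α * (Real.sqrt n : ℂ) * besselJ' p ((Real.sqrt n : ℂ) * κ)) :
    ∫ r in (0:ℝ)..1,
        (‖besselJ p (κ * (r : ℂ))‖ ^ 2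
          - n * ‖α‖ ^ 2
            * ‖besselJ p ((Real.sqrt n : ℂ) * κ * (r : ℂ))‖ ^ 2) * r = 0 := by
  rw [besselJ'_eq, besselJ'_eq] at hbc2
  set s : ℝ := Real.sqrt n with hs
  have hs0 : 0 < s := Real.sqrt_pos.2 hn
  have hs2 : ((s:ℂ))^2 = (n:ℂ) := by
    rw [← Complex.ofReal_pow]
    exact_mod_cast congrArg (Complex.ofReal) (Real.sq_sqrt hn.le)
  have hκ0 : κ ≠ 0 := fun h => hκ (by simp [h])
  -- cross integral vanishes
  have hcross : (∫ r in (0:ℝ)..1, ((r:ℂ) * besselJ p (κ*↑r) * besselJ p ((s:ℂ)*κ*↑r))) = 0 := by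
    have hC : (((s:ℂ)*κ)^2 - κ^2) ≠ 0 := by
      have : ((s:ℂ)*κ)^2 - κ^2 = ((n:ℂ) - 1) * κ^2 := by
        rw [mul_pow, hs2]; ring
      rw [this]
      apply mul_ne_zero
      · intro h
        apply hn1
        have : (n:ℂ) = 1 := by linear_combination h
        exact_mod_cast this
      · exact pow_ne_zero _ hκ0
    apply mul_left_cancel₀ hC
    rw [mul_zero, ← intervalIntegral.integral_const_mul]
    have heq : ∀ r:ℝ, (((s:ℂ)*κ)^2 - κ^2) * ((r:ℂ) * besselJ p (κ*↑r) * besselJ p ((s:ℂ)*κ*↑r))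
        = ((((s:ℂ)*κ)^2-κ^2) * (r:ℂ) * besselJ p (κ*↑r) * besselJ p ((s:ℂ)*κ*↑r)) := by
      intro r; ring
    rw [intervalIntegral.integral_congr (fun r _ => heq r), lommel p κ ((s:ℂ)*κ), hbc1, hbc2]
    ring
  by_cases hre : κ.re = 0
  · -- purely imaginary case: contradiction
    exfalso
    set t : ℝ := κ.im with ht
    have hκt : κ = I * ↑t := by
      apply Complex.ext <;> simp [hre, ht]
    have hpt : ∀ r : ℝ, (r:ℂ) * besselJ p (κ*↑r) * besselJ p ((s:ℂ)*κ*↑r)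
        = (-1:ℂ)^p * ((r * Ip p (t*r) * Ip p (s*(t*r)) : ℝ) : ℂ) := by
      intro r
      have e1 : κ * ↑r = I * ((t*r : ℝ) : ℂ) := by rw [hκt]; push_cast; ring
      have e2 : (s:ℂ) * κ * ↑r = I * ((s*(t*r) : ℝ) : ℂ) := by rw [hκt]; push_cast; ring
      rw [e1, e2, besselJ_I, besselJ_I]
      have hI2 : (I:ℂ)^p * (I:ℂ)^p = (-1:ℂ)^p := by
        rw [← mul_pow, Complex.I_mul_I]
      push_cast
      calc (r:ℂ) * ((I:ℂ)^p * ↑(Ip p (t*r))) * ((I:ℂ)^p * ↑(Ip p (s*(t*r))))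
          = ((I:ℂ)^p * (I:ℂ)^p) * ((r:ℂ) * ↑(Ip p (t*r)) * ↑(Ip p (s*(t*r)))) := by ring
        _ = _ := by rw [hI2]
    set g : ℝ → ℝ := fun r => r * Ip p (t*r) * Ip p (s*(t*r)) with hg
    have hgC : Continuous fun r : ℝ => ((g r : ℝ) : ℂ) := by
      have heqf : (fun r : ℝ => ((g r : ℝ) : ℂ))
          = fun r : ℝ => (-1:ℂ)^p * ((r:ℂ) * besselJ p (κ*↑r) * besselJ p ((s:ℂ)*κ*↑r)) := by
        funext r
        rw [hpt r, ← mul_assoc, ← mul_pow]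
        norm_num
        simp only [hg]; push_cast; ring
      rw [heqf]
      apply Continuous.mul continuous_const
      exact ((Complex.continuous_ofReal.mul (cont_aux p κ)).mul (cont_aux p ((s:ℂ)*κ)))
    have hgcont : Continuous g := by
      have : g = fun r => (((g r : ℝ) : ℂ)).re := by funext r; simp
      rw [this]
      exact Complex.continuous_re.comp hgC
    have hint0 : (∫ r in (0:ℝ)..1, g r) = 0 := by
      have h1 : ((∫ r in (0:ℝ)..1, g r : ℝ) : ℂ) = ∫ r in (0:ℝ)..1, ((g r : ℝ) : ℂ) :=
        (intervalIntegral.integral_ofReal).symm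
      have h2 : (∫ r in (0:ℝ)..1, ((g r : ℝ) : ℂ))
          = ∫ r in (0:ℝ)..1, (-1:ℂ)^p * ((r:ℂ) * besselJ p (κ*↑r) * besselJ p ((s:ℂ)*κ*↑r)) := by
        rw [intervalIntegral.integral_congr (g := fun r : ℝ =>
          (-1:ℂ)^p * ((r:ℂ) * besselJ p (κ*↑r) * besselJ p ((s:ℂ)*κ*↑r)))]
        intro r _
        simp only []
        rw [hpt r, ← mul_assoc, ← mul_pow]
        norm_num
        simp only [hg]; push_cast; ring
      have h3 : (∫ r in (0:ℝ)..1, (-1:ℂ)^p * ((r:ℂ) * besselJ p (κ*↑r) * besselJ p ((s:ℂ)*κ*↑r))) = 0 := by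
        rw [intervalIntegral.integral_const_mul, hcross, mul_zero]
      have := h1.trans (h2.trans h3)
      exact_mod_cast this
    have hpos : 0 < ∫ r in (0:ℝ)..1, g r := by
      apply intervalIntegral.intervalIntegral_pos_of_pos_on
        (hgcont.intervalIntegrable 0 1)
      · intro x hx
        rw [hg]
        have htx : t * x ≠ 0 := mul_ne_zero hκ hx.1.ne'
        have := Ip_mul_pos p hs0 htx
        have hxpos := hx.1
        calc (0:ℝ) < x * (Ip p (t*x) * Ip p (s*(t*x))) := by positivity
          _ = x * Ip p (t*x) * Ip p (s*(t*x)) := by ring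
      · norm_num
    linarith
  · -- κ.re ≠ 0 : genuine case
    have hbar1 : besselJ p ((starRingEnd ℂ) κ)
        = (starRingEnd ℂ) α * besselJ p ((s:ℂ) * (starRingEnd ℂ) κ) := by
      have h := congrArg (starRingEnd ℂ) hbc1
      rw [map_mul] at h
      rw [besselJ_conj, h, ← besselJ_conj, map_mul, Complex.conj_ofReal]
    have hbar2 : J1 p ((starRingEnd ℂ) κ)
        = (starRingEnd ℂ) α * (s:ℂ) * J1 p ((s:ℂ) * (starRingEnd ℂ) κ) := by
      have h := congrArg (starRingEnd ℂ) hbc2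
      rw [map_mul, map_mul, Complex.conj_ofReal] at h
      rw [J1_conj, h, ← J1_conj, map_mul, Complex.conj_ofReal]
    set κb : ℂ := (starRingEnd ℂ) κ with hκb
    set A1 : ℂ := ∫ r in (0:ℝ)..1, (r:ℂ) * besselJ p (κ*↑r) * besselJ p (κb*↑r) with hA1def
    set A2 : ℂ := ∫ r in (0:ℝ)..1, (r:ℂ) * besselJ p ((s:ℂ)*κ*↑r) * besselJ p ((s:ℂ)*κb*↑r) with hA2def
    have hA1 : (κb^2 - κ^2) * A1
        = κ * J1 p κ * besselJ p κb - κb * besselJ p κ * J1 p κb := by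
      rw [hA1def, ← intervalIntegral.integral_const_mul,
        intervalIntegral.integral_congr (g := fun r : ℝ =>
          ((κb^2-κ^2) * (r:ℂ) * besselJ p (κ*↑r) * besselJ p (κb*↑r)))
          (fun r _ => by simp only []; ring)]
      exact lommel p κ κb
    have hA2 : (((s:ℂ)*κb)^2 - ((s:ℂ)*κ)^2) * A2
        = (s:ℂ)*κ * J1 p ((s:ℂ)*κ) * besselJ p ((s:ℂ)*κb)
          - (s:ℂ)*κb * besselJ p ((s:ℂ)*κ) * J1 p ((s:ℂ)*κb) := by
      rw [hA2def, ← intervalIntegral.integral_const_mul,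
        intervalIntegral.integral_congr (g := fun r : ℝ =>
          (((((s:ℂ)*κb)^2-((s:ℂ)*κ)^2)) * (r:ℂ) * besselJ p ((s:ℂ)*κ*↑r) * besselJ p ((s:ℂ)*κb*↑r)))
          (fun r _ => by simp only []; ring)]
      exact lommel p ((s:ℂ)*κ) ((s:ℂ)*κb)
    have hN12 : κ * J1 p κ * besselJ p κb - κb * besselJ p κ * J1 p κb
        = (α * (starRingEnd ℂ) α) * ((s:ℂ)*κ * J1 p ((s:ℂ)*κ) * besselJ p ((s:ℂ)*κb)
          - (s:ℂ)*κb * besselJ p ((s:ℂ)*κ) * J1 p ((s:ℂ)*κb)) := by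
      rw [hbc1, hbc2, hbar1, hbar2]; ring
    have hC : κb^2 - κ^2 ≠ 0 := by
      have h1 : κb - κ ≠ 0 := by
        intro h
        apply hκ
        have him := congrArg Complex.im h
        simp [hκb, Complex.sub_im, Complex.conj_im] at him
        linarith [him]
      have h2 : κb + κ ≠ 0 := by
        intro h
        apply hre
        have hrre := congrArg Complex.re h
        simp [hκb, Complex.add_re, Complex.conj_re] at hrre
        linarith [hrre]
      have : κb^2 - κ^2 = (κb - κ) * (κb + κ) := by ring
      rw [this]
      exact mul_ne_zero h1 h2
    have key : A1 = (n:ℂ) * (α * (starRingEnd ℂ) α) * A2 := by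
      apply mul_left_cancel₀ hC
      linear_combination hA1 + hN12 - (α * (starRingEnd ℂ) α) * hA2
        + (α * (starRingEnd ℂ) α) * A2 * (κb^2 - κ^2) * hs2
    -- now convert the real integral
    have habs : ∀ z:ℂ, ((‖z‖ ^ 2 : ℝ) : ℂ) = z * (starRingEnd ℂ) z := by
      intro z
      rw [← Complex.normSq_eq_norm_sq]
      exact (Complex.mul_conj z).symm
    have hptr : ∀ r : ℝ,
        ((((‖besselJ p (κ * (r:ℂ))‖)^2
          - n * (‖α‖)^2 * (‖besselJ p ((s:ℂ)*κ*(r:ℂ))‖)^2) * r : ℝ) : ℂ)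
        = (r:ℂ) * besselJ p (κ*↑r) * besselJ p (κb*↑r)
          - (n:ℂ) * (α * (starRingEnd ℂ) α) * ((r:ℂ) * besselJ p ((s:ℂ)*κ*↑r) * besselJ p ((s:ℂ)*κb*↑r)) := by
      intro r
      have c1 : (starRingEnd ℂ) (besselJ p (κ*↑r)) = besselJ p (κb * ↑r) := by
        rw [hκb, ← besselJ_conj, map_mul, Complex.conj_ofReal]
      have c2 : (starRingEnd ℂ) (besselJ p ((s:ℂ)*κ*↑r)) = besselJ p ((s:ℂ)*κb*↑r) := by
        rw [hκb, ← besselJ_conj, map_mul, map_mul, Complex.conj_ofReal, Complex.conj_ofReal]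
      calc ((((‖besselJ p (κ * (r:ℂ))‖)^2
          - n * (‖α‖)^2 * (‖besselJ p ((s:ℂ)*κ*(r:ℂ))‖)^2) * r : ℝ) : ℂ)
          = (((‖besselJ p (κ * (r:ℂ))‖^2 : ℝ) : ℂ)
            - (n:ℂ) * ((‖α‖^2 : ℝ) : ℂ) * ((‖besselJ p ((s:ℂ)*κ*(r:ℂ))‖^2 : ℝ):ℂ)) * (r:ℂ) := by
            push_cast; ring
        _ = _ := by rw [habs, habs, habs, c1, c2]; ring
    have hi1 : IntervalIntegrable (fun r : ℝ => (r:ℂ) * besselJ p (κ*↑r) * besselJ p (κb*↑r))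
        volume 0 1 := by
      apply Continuous.intervalIntegrable
      exact (Complex.continuous_ofReal.mul (cont_aux p κ)).mul (cont_aux p κb)
    have hi2 : IntervalIntegrable (fun r : ℝ =>
        (n:ℂ) * (α * (starRingEnd ℂ) α) * ((r:ℂ) * besselJ p ((s:ℂ)*κ*↑r) * besselJ p ((s:ℂ)*κb*↑r)))
        volume 0 1 := by
      apply Continuous.intervalIntegrable
      exact continuous_const.mul
        ((Complex.continuous_ofReal.mul (cont_aux p ((s:ℂ)*κ))).mul (cont_aux p ((s:ℂ)*κb)))
    have hfin : ((∫ r in (0:ℝ)..1,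
        ((‖besselJ p (κ * (r : ℂ))‖) ^ 2
          - n * (‖α‖) ^ 2
            * (‖besselJ p ((s:ℂ) * κ * (r : ℂ))‖) ^ 2) * r : ℝ) : ℂ) = 0 := by
      rw [← intervalIntegral.integral_ofReal]
      rw [intervalIntegral.integral_congr (g := fun r : ℝ =>
        (r:ℂ) * besselJ p (κ*↑r) * besselJ p (κb*↑r)
          - (n:ℂ) * (α * (starRingEnd ℂ) α) * ((r:ℂ) * besselJ p ((s:ℂ)*κ*↑r) * besselJ p ((s:ℂ)*κb*↑r)))
        (fun r _ => hptr r)]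
      rw [intervalIntegral.integral_sub hi1 hi2, intervalIntegral.integral_const_mul]
      rw [← hA1def, ← hA2def, key]
      ring
    exact_mod_cast hfin
end
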